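/- arXiv:2105.00618 — 3 statements merged into one kernel-verified Lean document; each statement's English description precedes it below -/
import Mathlib

section
/- Let B ≥ 2 and let l_1, …, l_n be positive integers satisfying the Kraft inequality ∑_{i=1}^n B^{-l_i} ≤ 1. Then there exists a prefix-free code over an alphabet of B symbols consisting of n pairwise distinct codewords c_1, …, c_n with |c_i| = l_i for every i, i.e., no c_i is a prefix of c_j for i ≠ j. -/
/-- Big-endian base-`B` word of length `L` representing `m`. -/
def twKraft (B : ℕ) (hB : 0 < B) : ℕ → ℕ → List (Fin B)
  | 0, _ => []
  | (L+1), m => ⟨m / B^L % B, Nat.mod_lt _ hB⟩ :: twKraft B hB L (m % B^L)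

lemma twKraft_length (B : ℕ) (hB : 0 < B) : ∀ L m, (twKraft B hB L m).length = L
  | 0, _ => rfl
  | (L+1), m => by simp [twKraft, twKraft_length B hB L]

lemma twKraft_prefix (B : ℕ) (hB : 0 < B) :
    ∀ L1 L2 m1 m2, m1 < B^L1 → m2 < B^L2 →
      twKraft B hB L1 m1 <+: twKraft B hB L2 m2 →
      L1 ≤ L2 ∧ m2 / B^(L2 - L1) = m1 := by
  intro L1
  induction L1 with
  | zero =>
    intro L2 m1 m2 h1 h2 _
    simp at h1
    exact ⟨Nat.zero_le _, by simpa [h1] using Nat.div_eq_of_lt h2⟩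
  | succ k ih =>
    intro L2 m1 m2 h1 h2 hp
    cases L2 with
    | zero =>
      exfalso
      simpa [twKraft] using hp.length_le
    | succ k2 =>
      simp only [twKraft, List.cons_prefix_cons] at hp
      obtain ⟨hhd, htl⟩ := hp
      have hd1 : m1 / B^k < B := Nat.div_lt_of_lt_mul (by rw [← pow_succ]; exact h1)
      have hd2 : m2 / B^k2 < B := Nat.div_lt_of_lt_mul (by rw [← pow_succ]; exact h2)
      have hhd' : m1 / B^k = m2 / B^k2 := by
        have := congrArg Fin.val hhd
        simpa [Nat.mod_eq_of_lt hd1, Nat.mod_eq_of_lt hd2] using this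
      obtain ⟨hle, hdiv⟩ := ih k2 (m1 % B^k) (m2 % B^k2)
        (Nat.mod_lt _ (pow_pos hB k)) (Nat.mod_lt _ (pow_pos hB k2)) htl
      refine ⟨Nat.succ_le_succ hle, ?_⟩
      have hsub : k2 + 1 - (k + 1) = k2 - k := by omega
      rw [hsub]
      have hm2 : m2 = m2 % B^k2 + (m2 / B^k2) * B^k * B^(k2-k) := by
        rw [mul_assoc, ← pow_add]
        have : k + (k2 - k) = k2 := by omega
        rw [this, Nat.mod_add_div']
      rw [hm2, Nat.add_mul_div_right _ _ (pow_pos hB _), hdiv, ← hhd',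
        Nat.mod_add_div']

/-- **Converse of the Kraft inequality.** If positive integer lengths `l 1, …, l n` satisfy
`∑ B^{-l i} ≤ 1` with `B ≥ 2`, then there exists a prefix-free code over an alphabet of `B`
symbols with `n` pairwise distinct codewords of exactly these lengths. -/
theorem kraft_converse (B n : ℕ) (hB : 2 ≤ B) (l : Fin n → ℕ) (hl : ∀ i, 0 < l i)
    (hkraft : ∑ i, ((B : ℝ) ^ l i)⁻¹ ≤ 1) :
    ∃ c : Fin n → List (Fin B), Function.Injective c ∧
      (∀ i, (c i).length = l i) ∧
      (∀ i j, i ≠ j → ¬ c i <+: c j) := by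
  have hB0 : 0 < B := by omega
  have hBR : (0:ℝ) < B := by exact_mod_cast hB0
  set σ := Tuple.sort l with hσ
  set l' : Fin n → ℕ := l ∘ σ with hl'
  have hmono : Monotone l' := Tuple.monotone_sort l
  -- Kraft for sorted lengths
  have hkraft' : ∑ i, ((B : ℝ) ^ l' i)⁻¹ ≤ 1 := by
    have := Equiv.sum_comp σ (fun i => ((B : ℝ) ^ l i)⁻¹)
    simpa [hl', Function.comp] using this.trans_le hkraft
  -- the numerical codeword values
  set N : Fin n → ℕ := fun i => ∑ j ∈ Finset.Iio i, B ^ (l' i - l' j) with hN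
  -- sum over Iic
  have hIic : ∀ i : Fin n, ∑ j ∈ Finset.Iic i, B ^ (l' i - l' j) = N i + 1 := by
    intro i
    rw [← Finset.Iio_insert, Finset.sum_insert (by simp)]
    simp [hN, add_comm]
  -- N i < B ^ l' i
  have hNlt : ∀ i, N i < B ^ l' i := by
    intro i
    have hcast : ((N i + 1 : ℕ) : ℝ) ≤ (B:ℝ) ^ l' i := by
      rw [← hIic i]
      push_cast
      have heq : ∀ j ∈ Finset.Iic i, (B:ℝ) ^ (l' i - l' j) =
          (B:ℝ) ^ l' i * ((B:ℝ) ^ l' j)⁻¹ := by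
        intro j hj
        have hle : l' j ≤ l' i := hmono (Finset.mem_Iic.mp hj)
        have hx : (B:ℝ) ^ l' i = (B:ℝ) ^ (l' i - l' j) * (B:ℝ) ^ l' j := by
          rw [← pow_add]; congr 1; omega
        rw [hx, mul_inv_cancel_right₀ (by positivity)]
      rw [Finset.sum_congr rfl heq, ← Finset.mul_sum]
      calc (B:ℝ) ^ l' i * ∑ j ∈ Finset.Iic i, ((B:ℝ) ^ l' j)⁻¹
          ≤ (B:ℝ) ^ l' i * 1 := by
            apply mul_le_mul_of_nonneg_left _ (by positivity)
            refine le_trans (Finset.sum_le_sum_of_subset_of_nonneg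
              (Finset.subset_univ _) (fun j _ _ => by positivity)) hkraft'
        _ = (B:ℝ) ^ l' i := mul_one _
    have : (N i + 1 : ℕ) ≤ B ^ l' i := by exact_mod_cast hcast
    omega
  -- key inequality for i < j
  have hkey : ∀ i j : Fin n, i < j → (N i + 1) * B ^ (l' j - l' i) ≤ N j := by
    intro i j hij
    have hsub : Finset.Iic i ⊆ Finset.Iio j := by
      intro k hk
      simp only [Finset.mem_Iic] at hk
      simp only [Finset.mem_Iio]
      exact lt_of_le_of_lt hk hij
    calc (N i + 1) * B ^ (l' j - l' i)
        = ∑ k ∈ Finset.Iic i, B ^ (l' i - l' k) * B ^ (l' j - l' i) := by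
          rw [← Finset.sum_mul, hIic]
      _ = ∑ k ∈ Finset.Iic i, B ^ (l' j - l' k) := by
          apply Finset.sum_congr rfl
          intro k hk
          have h1 : l' k ≤ l' i := hmono (Finset.mem_Iic.mp hk)
          have h2 : l' i ≤ l' j := hmono hij.le
          rw [← pow_add]
          congr 1
          omega
      _ ≤ N j := Finset.sum_le_sum_of_subset hsub
  -- codewords for sorted lengths
  set c' : Fin n → List (Fin B) := fun i => twKraft B hB0 (l' i) (N i) with hc'
  have hpf' : ∀ i j : Fin n, i ≠ j → ¬ c' i <+: c' j := by
    intro i j hij hp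
    obtain ⟨hle, hdiv⟩ := twKraft_prefix B hB0 _ _ _ _ (hNlt i) (hNlt j) hp
    rcases lt_or_gt_of_ne hij with h | h
    · have := hkey i j h
      have : N i + 1 ≤ N j / B ^ (l' j - l' i) :=
        (Nat.le_div_iff_mul_le (pow_pos hB0 _)).mpr this
      omega
    · have hle' : l' j ≤ l' i := hmono h.le
      have heq : l' i = l' j := le_antisymm hle hle'
      have := hkey j i h
      rw [heq] at this hdiv
      simp at this hdiv
      omega
  refine ⟨fun i => c' (σ.symm i), ?_, ?_, ?_⟩
  · intro i j hij
    by_contra hne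
    apply hpf' (σ.symm i) (σ.symm j) (fun h => hne (by simpa using congrArg σ h))
    simp only at hij
    rw [hij]
  · intro i
    simp [hc', twKraft_length, hl', Function.comp]
  · intro i j hij
    exact hpf' _ _ (fun h => hij (by simpa using congrArg σ h))
end

section
/- Let B ≥ 2 and let C be a finite prefix-free code over an alphabet of B symbols with |C| = n ≥ 2 codewords that satisfies the Kraft equality ∑_{c ∈ C} B^{-|c|} = 1. Then every codeword of C has length at most (n − 1)/(B − 1). In particular, the depth of a full B-ary (Huffman) tree with n leaves is at most ⌈(n−1)/(B−1)⌉. -/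
lemma kraft_ineq (B : ℕ) (hB : 1 ≤ B) :
    ∀ M (D : Finset (List (Fin B))),
      (∀ d ∈ D, d.length ≤ M) →
      (∀ c ∈ D, ∀ d ∈ D, c ≠ d → ¬ c <+: d) →
      ∑ d ∈ D, ((B : ℝ) ^ d.length)⁻¹ ≤ 1 := by
  have hB0 : (0:ℝ) < (B:ℝ) := by exact_mod_cast Nat.lt_of_lt_of_le Nat.zero_lt_one hB
  intro M
  induction M with
  | zero =>
    intro D hlen hpf
    have hsub : D ⊆ {[]} := by
      intro d hd
      have := Nat.le_zero.mp (hlen d hd)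
      simp [List.length_eq_zero_iff.mp this]
    calc ∑ d ∈ D, ((B:ℝ) ^ d.length)⁻¹
        ≤ ∑ d ∈ ({[]} : Finset (List (Fin B))), ((B:ℝ) ^ d.length)⁻¹ :=
          Finset.sum_le_sum_of_subset_of_nonneg hsub (by intros; positivity)
      _ = 1 := by simp
  | succ M ih =>
    intro D hlen hpf
    classical
    by_cases h0 : ([] : List (Fin B)) ∈ D
    · have hD : D = {[]} := by
        apply Finset.eq_singleton_iff_unique_mem.mpr
        refine ⟨h0, fun d hd => ?_⟩
        by_contra hne
        exact hpf [] h0 d hd (Ne.symm hne) (List.nil_prefix)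
      simp [hD]
    · haveI : Inhabited (Fin B) := ⟨⟨0, hB⟩⟩
      have hcons : ∀ d ∈ D, d.headI :: d.tail = d := by
        intro d hd
        cases d with
        | nil => exact absurd hd h0
        | cons a t => rfl
      have key : ∀ a : Fin B,
          ∑ d ∈ D.filter (fun d => d.headI = a), ((B:ℝ) ^ d.length)⁻¹ ≤ (B:ℝ)⁻¹ := by
        intro a
        set Da := D.filter (fun d => d.headI = a) with hDa
        have hmem : ∀ d ∈ Da, d ∈ D ∧ d.headI = a := by
          intro d hd; exact Finset.mem_filter.mp hd
        have hinj : Set.InjOn List.tail (Da : Set (List (Fin B))) := by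
          intro x hx y hy hxy
          have hx' := hmem x hx; have hy' := hmem y hy
          have := hcons x hx'.1
          have := hcons y hy'.1
          rw [← hcons x hx'.1, ← hcons y hy'.1, hx'.2, hy'.2, hxy]
        have hsum : ∑ d ∈ Da, ((B:ℝ) ^ d.length)⁻¹
            = ∑ e ∈ Da.image List.tail, ((B:ℝ) ^ (e.length + 1))⁻¹ := by
          rw [Finset.sum_image (fun x hx y hy h => hinj hx hy h)]
          apply Finset.sum_congr rfl
          intro d hd
          have : d.tail.length + 1 = d.length := by
            rw [← hcons d (hmem d hd).1]; simp
          rw [this]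
        have hIH : ∑ e ∈ Da.image List.tail, ((B:ℝ) ^ e.length)⁻¹ ≤ 1 := by
          apply ih
          · intro e he
            obtain ⟨d, hd, rfl⟩ := Finset.mem_image.mp he
            have := hlen d (hmem d hd).1
            have h1 : d.tail.length + 1 = d.length := by
              rw [← hcons d (hmem d hd).1]; simp
            omega
          · intro e he f hf hef hpre
            obtain ⟨d, hd, rfl⟩ := Finset.mem_image.mp he
            obtain ⟨d', hd', rfl⟩ := Finset.mem_image.mp hf
            have hdd' : d ≠ d' := fun h => hef (by rw [h])
            apply hpf d (hmem d hd).1 d' (hmem d' hd').1 hdd'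
            rw [← hcons d (hmem d hd).1, ← hcons d' (hmem d' hd').1,
              (hmem d hd).2, (hmem d' hd').2]
            exact List.cons_prefix_cons.mpr ⟨rfl, hpre⟩
        calc ∑ d ∈ Da, ((B:ℝ) ^ d.length)⁻¹
            = ∑ e ∈ Da.image List.tail, ((B:ℝ) ^ (e.length + 1))⁻¹ := hsum
          _ = (B:ℝ)⁻¹ * ∑ e ∈ Da.image List.tail, ((B:ℝ) ^ e.length)⁻¹ := by
              rw [Finset.mul_sum]
              apply Finset.sum_congr rfl
              intro e _
              rw [pow_succ, mul_inv]
              ring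
          _ ≤ (B:ℝ)⁻¹ * 1 := by
              apply mul_le_mul_of_nonneg_left hIH (by positivity)
          _ = (B:ℝ)⁻¹ := mul_one _
      calc ∑ d ∈ D, ((B:ℝ) ^ d.length)⁻¹
          = ∑ a : Fin B, ∑ d ∈ D.filter (fun d => d.headI = a), ((B:ℝ) ^ d.length)⁻¹ :=
            (Finset.sum_fiberwise D (fun d => d.headI) _).symm
        _ ≤ ∑ _a : Fin B, (B:ℝ)⁻¹ := Finset.sum_le_sum (fun a _ => key a)
        _ = 1 := by
            rw [Finset.sum_const, Finset.card_univ, Fintype.card_fin, nsmul_eq_mul]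
            field_simp



/-- **Depth bound for full `B`-ary (Huffman) trees.** If a finite prefix-free code over an
alphabet of `B ≥ 2` symbols with `n ≥ 2` codewords satisfies the Kraft equality
`∑_{c ∈ C} B^{-|c|} = 1`, then every codeword has length at most `(n - 1)/(B - 1)`;
in particular the depth (maximum codeword length) is at most `⌈(n - 1)/(B - 1)⌉`. -/
theorem huffman_depth_bound (B n : ℕ) (hB : 2 ≤ B) (hn : 2 ≤ n)
    (C : Finset (List (Fin B)))
    (hpf : ∀ c ∈ C, ∀ d ∈ C, c ≠ d → ¬ c <+: d)
    (hcard : C.card = n)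
    (hkraft : ∑ c ∈ C, ((B : ℝ) ^ c.length)⁻¹ = 1) :
    ∀ c ∈ C, (c.length : ℝ) ≤ ((n : ℝ) - 1) / ((B : ℝ) - 1) ∧
      c.length ≤ ⌈((n : ℝ) - 1) / ((B : ℝ) - 1)⌉₊ := by
  classical
  have hB0R : (0:ℝ) < (B:ℝ) := by positivity
  intro c hc
  -- existence of extension codewords
  have hext : ∀ (k : ℕ) (hk : k < c.length) (a : Fin B), a ≠ c.get ⟨k, hk⟩ →
      ∃ d ∈ C, (c.take k ++ [a]) <+: d := by
    intro k hk a ha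
    by_contra h
    push_neg at h
    set p := c.take k ++ [a] with hp
    have htklen : (c.take k).length = k := by simp [List.length_take]; omega
    have hplen : p.length = k + 1 := by simp [hp, htklen]
    have hpnot : p ∉ C := fun hpC => h p hpC (List.prefix_refl p)
    have hpf' : ∀ x ∈ insert p C, ∀ y ∈ insert p C, x ≠ y → ¬ x <+: y := by
      intro x hx y hy hxy hpre
      rcases Finset.mem_insert.mp hx with rfl | hxC
      · rcases Finset.mem_insert.mp hy with rfl | hyC
        · exact hxy rfl
        · exact h y hyC hpre
      · rcases Finset.mem_insert.mp hy with rfl | hyC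
        · have hxlen : x.length ≤ k + 1 := hplen ▸ hpre.length_le
          rcases eq_or_lt_of_le hxlen with heq | hlt
          · exact hpnot (hpre.eq_of_length (by omega) ▸ hxC)
          · have hxk : x.length ≤ k := by omega
            have h1 : x <+: c.take k :=
              List.prefix_of_prefix_length_le hpre (List.prefix_append _ _)
                (by omega)
            have hxc : x <+: c := h1.trans (List.take_prefix k c)
            have hxne : x ≠ c := by
              intro hxc'
              have := hxc' ▸ hxk
              omega
            exact hpf x hxC c hc hxne hxc
        · exact hpf x hxC y hyC hxy hpre
    have hsum := kraft_ineq B (by omega) ((insert p C).sup List.length) (insert p C)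
      (fun d hd => Finset.le_sup hd) hpf'
    rw [Finset.sum_insert hpnot, hkraft, hplen] at hsum
    have hpos : (0:ℝ) < ((B:ℝ) ^ (k+1))⁻¹ := by positivity
    linarith
  -- choice function
  have hextc : ∀ q : Fin c.length × Fin B,
      ∃ d, (q.2 ≠ c.get q.1) → d ∈ C ∧ (c.take q.1 ++ [q.2]) <+: d := by
    intro q
    by_cases hq : q.2 ≠ c.get q.1
    · obtain ⟨d, hd, hpre⟩ := hext q.1 q.1.isLt q.2 (by simpa using hq)
      exact ⟨d, fun _ => ⟨hd, hpre⟩⟩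
    · exact ⟨[], fun h => absurd h hq⟩
  choose φ hφ using hextc
  set I : Finset (Fin c.length × Fin B) :=
    Finset.univ.filter (fun q => q.2 ≠ c.get q.1) with hI
  have hmemI : ∀ q ∈ I, q.2 ≠ c.get q.1 := fun q hq => (Finset.mem_filter.mp hq).2
  -- prefix gives getElem facts
  have hpq : ∀ q ∈ I, (c.take q.1.1 ++ [q.2]) <+: φ q := fun q hq => (hφ q (hmemI q hq)).2
  have hlenp : ∀ (q : Fin c.length × Fin B), (c.take q.1.1 ++ [q.2]).length = q.1.1 + 1 := by
    intro q
    simp only [List.length_append, List.length_take, List.length_singleton]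
    have := q.1.isLt
    omega
  have hgetp : ∀ (q : Fin c.length × Fin B) (m : ℕ) (hm : m < c.length) (hmq : m < q.1.1)
      (hml : m < (c.take q.1.1 ++ [q.2]).length),
      (c.take q.1.1 ++ [q.2])[m] = c.get ⟨m, hm⟩ := by
    intro q m hm hmq hml
    rw [List.getElem_append_left (by simp only [List.length_take]; omega), List.getElem_take,
      List.get_eq_getElem]
  have hgeta : ∀ (q : Fin c.length × Fin B) (hl : q.1.1 < (c.take q.1.1 ++ [q.2]).length),
      (c.take q.1.1 ++ [q.2])[q.1.1] = q.2 := by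
    intro q hl
    exact List.getElem_concat_length (by simp only [List.length_take]; omega) _
  -- injection into C.erase c
  have hmaps : ∀ q ∈ I, φ q ∈ C.erase c := by
    intro q hq
    have hmem := (hφ q (hmemI q hq)).1
    refine Finset.mem_erase.mpr ⟨?_, hmem⟩
    intro hqc
    have hpre := hpq q hq
    rw [hqc] at hpre
    have hl : q.1.1 < (c.take q.1.1 ++ [q.2]).length := by rw [hlenp q]; omega
    have := hpre.getElem (i := q.1.1) hl
    rw [hgeta q hl] at this
    have hne := hmemI q hq
    rw [List.get_eq_getElem] at hne
    exact hne this
  have hinjOn : Set.InjOn φ (I : Set (Fin c.length × Fin B)) := by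
    intro q hq q' hq' heq
    have hqI : q ∈ I := Finset.mem_coe.mp hq
    have hq'I : q' ∈ I := Finset.mem_coe.mp hq' 
    have hp1 := hpq q hqI
    have hp2 := hpq q' hq'I
    rw [heq] at hp1
    -- wlog on lengths
    have key : ∀ (r s : Fin c.length × Fin B), r ∈ I → s ∈ I →
        (c.take r.1.1 ++ [r.2]) <+: φ s → (c.take s.1.1 ++ [s.2]) <+: φ s →
        r.1.1 ≤ s.1.1 → r = s := by
      intro r s hrI hsI hpr hps hle
      have hcomp : (c.take r.1.1 ++ [r.2]) <+: (c.take s.1.1 ++ [s.2]) := by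
        apply List.prefix_of_prefix_length_le hpr hps
        rw [hlenp r, hlenp s]
        omega
      rcases eq_or_lt_of_le hle with heq1 | hlt1
      · -- equal lengths → equal lists → equal second components
        have hlen : (c.take r.1.1 ++ [r.2]).length = (c.take s.1.1 ++ [s.2]).length := by
          rw [hlenp r, hlenp s, heq1]
        have := hcomp.eq_of_length hlen
        have h2 : r.2 = s.2 := by
          rw [heq1] at this
          simpa using List.append_inj_right this rfl
        have h1 : r.1 = s.1 := Fin.ext heq1
        exact Prod.ext h1 h2
      · exfalso
        have hl1 : r.1.1 < (c.take r.1.1 ++ [r.2]).length := by rw [hlenp r]; omega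
        have hl2 : r.1.1 < (c.take s.1.1 ++ [s.2]).length := by rw [hlenp s]; omega
        have hgr := hcomp.getElem (i := r.1.1) hl1
        rw [hgeta r hl1, hgetp s r.1.1 r.1.isLt hlt1 hl2] at hgr
        have hne := hmemI r hrI
        rw [show (⟨r.1.1, r.1.isLt⟩ : Fin c.length) = r.1 from Fin.eta _ _] at hgr
        exact hne hgr
    rcases le_total q.1.1 q'.1.1 with hle | hle
    · exact key q q' hqI hq'I hp1 hp2 hle
    · exact (key q' q hq'I hqI (heq ▸ hp2) (heq ▸ hp1) hle).symm
  have hcardle : I.card ≤ (C.erase c).card :=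
    Finset.card_le_card_of_injOn φ hmaps hinjOn
  -- compute I.card
  have hIcard : I.card = c.length * (B - 1) := by
    rw [hI, Finset.card_filter, Fintype.sum_prod_type]
    have inner : ∀ i : Fin c.length,
        (∑ a : Fin B, if a ≠ c.get i then (1:ℕ) else 0) = B - 1 := by
      intro i
      rw [← Finset.card_filter, Finset.filter_ne', Finset.card_erase_of_mem (Finset.mem_univ _),
        Finset.card_univ, Fintype.card_fin]
    simp only [inner]
    rw [Finset.sum_const, Finset.card_univ, Fintype.card_fin, smul_eq_mul]
  have hfinal : c.length * (B - 1) ≤ n - 1 := by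
    rw [← hIcard]
    calc I.card ≤ (C.erase c).card := hcardle
      _ = n - 1 := by rw [Finset.card_erase_of_mem hc, hcard]
  -- cast to ℝ
  have hcast := (Nat.cast_le (α := ℝ)).mpr hfinal
  rw [Nat.cast_mul, Nat.cast_sub (by omega : 1 ≤ B), Nat.cast_sub (by omega : 1 ≤ n),
    Nat.cast_one] at hcast
  have hBpos : (0:ℝ) < (B:ℝ) - 1 := by
    have : (2:ℝ) ≤ (B:ℝ) := by exact_mod_cast hB
    linarith
  have h1 : (c.length : ℝ) ≤ ((n : ℝ) - 1) / ((B : ℝ) - 1) :=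
    (le_div_iff₀ hBpos).mpr hcast
  refine ⟨h1, ?_⟩
  have h2 : (c.length : ℝ) ≤ (⌈((n : ℝ) - 1) / ((B : ℝ) - 1)⌉₊ : ℝ) :=
    h1.trans (Nat.le_ceil _)
  exact_mod_cast h2
end

section
/- Let X_1, …, X_n be independent Bernoulli random variables on a probability space, where X_i takes the value 1 with probability p_i ∈ [0,1] and 0 otherwise, let λ = ∑_{i=1}^n p_i, and let Y = ∑_{i=1}^n X_i count the number of variables equal to 1. Then the distribution of Y is close to the Poisson distribution with rate λ in total variation: ∑_{k=0}^∞ | P(Y = k) − e^{−λ} λ^k / k! | ≤ 2 ∑_{i=1}^n p_i². In particular, when the p_i are small and ∑ p_i = 1, P(Y = k) is approximately e^{−1}/k!. -/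
open MeasureTheory ProbabilityTheory
open scoped ENNReal NNReal

/-- Poisson pmf with real rate. -/
noncomputable def pois (l : ℝ) (k : ℕ) : ℝ := Real.exp (-l) * l ^ k / (Nat.factorial k)

lemma pois_nonneg {l : ℝ} (hl : 0 ≤ l) (k : ℕ) : 0 ≤ pois l k := by
  unfold pois; positivity

lemma hasSum_pois {l : ℝ} (hl : 0 ≤ l) : HasSum (pois l) 1 := by
  have h := poissonPMFRealSum ⟨l, hl⟩
  have he : pois l = fun k => poissonPMFReal ⟨l, hl⟩ k := by
    funext k; simp [pois, poissonPMFReal]; rfl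
  rw [he]; exact h

lemma summable_pois {l : ℝ} (hl : 0 ≤ l) : Summable (pois l) := (hasSum_pois hl).summable

lemma tsum_pois {l : ℝ} (hl : 0 ≤ l) : ∑' k, pois l k = 1 := (hasSum_pois hl).tsum_eq

/-- shift: `fm f k = f (k-1)` with `fm f 0 = 0`. -/
def fm (f : ℕ → ℝ) : ℕ → ℝ
  | 0 => 0
  | k + 1 => f k

lemma summable_fm {u : ℕ → ℝ} (hu : Summable u) : Summable (fm u) := by
  rw [← summable_nat_add_iff 1]; exact hu

lemma tsum_fm {u : ℕ → ℝ} (hu : Summable u) : ∑' k, fm u k = ∑' k, u k := by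
  rw [Summable.tsum_eq_zero_add (summable_fm hu)]; simp [fm]

/-- Bernoulli pmf. -/
noncomputable def bern (p : ℝ) : ℕ → ℝ
  | 0 => 1 - p
  | 1 => p
  | _ => 0

lemma summable_bern (p : ℝ) : Summable (bern p) := by
  apply summable_of_ne_finset_zero (s := {0, 1})
  intro k hk
  match k, hk with
  | (m+2), _ => rfl

lemma summable_bern_sub_pois {p : ℝ} (hp : 0 ≤ p) :
    Summable (fun j => |bern p j - pois p j|) :=
  ((summable_bern p).sub (summable_pois hp)).abs

lemma bern_pois_dist {p : ℝ} (hp0 : 0 ≤ p) (hp1 : p ≤ 1) :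
    ∑' j, |bern p j - pois p j| ≤ 2 * p ^ 2 := by
  have hS := summable_bern_sub_pois hp0
  have htail : ∑' j, pois p (j + 2) = 1 - pois p 0 - pois p 1 := by
    have h0 := tsum_pois hp0
    rw [Summable.tsum_eq_zero_add (summable_pois hp0)] at h0
    rw [Summable.tsum_eq_zero_add ((summable_nat_add_iff 1).mpr (summable_pois hp0))] at h0
    have : Summable (fun j => pois p (j + 1 + 1)) := by
      exact (summable_nat_add_iff 2).mpr (summable_pois hp0)
    linarith [h0]
  rw [Summable.tsum_eq_zero_add hS, Summable.tsum_eq_zero_add ((summable_nat_add_iff 1).mpr hS)]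
  have heq : ∀ j : ℕ, |bern p (j + 1 + 1) - pois p (j + 1 + 1)| = pois p (j + 2) := by
    intro j
    have : bern p (j + 2) = 0 := rfl
    rw [show j + 1 + 1 = j + 2 from rfl, this, zero_sub, abs_neg,
      abs_of_nonneg (pois_nonneg hp0 _)]
  simp only [heq]
  rw [htail]
  have he1 : 1 - p ≤ Real.exp (-p) := by
    have := Real.add_one_le_exp (-p); linarith
  have he2 : Real.exp (-p) ≤ 1 := Real.exp_le_one_iff.mpr (by linarith)
  have hb0 : bern p 0 = 1 - p := rfl
  have hb1 : bern p 1 = p := rfl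
  have hp0' : pois p 0 = Real.exp (-p) := by simp [pois]
  have hp1' : pois p 1 = Real.exp (-p) * p := by simp [pois]
  rw [hb0, hb1, hp0', hp1']
  rw [abs_of_nonpos (by nlinarith), abs_of_nonneg (by nlinarith)]
  nlinarith [Real.exp_pos (-p)]

lemma pois_conv {a b : ℝ} (k : ℕ) :
    pois (a + b) k = ∑ j ∈ Finset.range (k + 1), pois a j * pois b (k - j) := by
  unfold pois
  rw [neg_add, Real.exp_add, add_pow]
  rw [Finset.mul_sum, Finset.sum_div]
  apply Finset.sum_congr rfl
  intro j hj
  have hj' : j ≤ k := Nat.lt_succ_iff.mp (Finset.mem_range.mp hj)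
  have hfac : (j.factorial : ℝ) * ((k - j).factorial : ℝ) * (k.choose j : ℝ)
      = (k.factorial : ℝ) := by
    have := Nat.choose_mul_factorial_mul_factorial hj'
    push_cast [← this]
    ring
  have h1 : (j.factorial : ℝ) ≠ 0 := Nat.cast_ne_zero.mpr (Nat.factorial_ne_zero j)
  have h2 : ((k - j).factorial : ℝ) ≠ 0 := Nat.cast_ne_zero.mpr (Nat.factorial_ne_zero _)
  have h3 : (k.factorial : ℝ) ≠ 0 := Nat.cast_ne_zero.mpr (Nat.factorial_ne_zero k)
  field_simp
  rw [← hfac]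
  ring

lemma bern_conv (p l : ℝ) (k : ℕ) :
    ∑ j ∈ Finset.range (k + 1), bern p j * pois l (k - j)
      = (1 - p) * pois l k + p * fm (pois l) k := by
  cases k with
  | zero => simp [bern, fm]
  | succ m =>
    rw [Finset.sum_range_succ', Finset.sum_range_succ']
    have hz : ∀ j : ℕ, bern p (j + 1 + 1) = 0 := fun j => rfl
    simp only [hz, zero_mul, Finset.sum_const_zero, zero_add]
    have : bern p 1 = p := rfl
    rw [this]
    have : bern p 0 = 1 - p := rfl
    rw [this]
    simp [fm]
    ring

lemma lemA {f : ℕ → ℝ} (hfs : Summable f)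
    {l q : ℝ} (hl : 0 ≤ l) (hq0 : 0 ≤ q) (hq1 : q ≤ 1) :
    ∑' k, |((1 - q) * f k + q * fm f k) - pois (l + q) k|
      ≤ (∑' k, |f k - pois l k|) + 2 * q ^ 2 := by
  set D : ℕ → ℝ := fun k => |f k - pois l k| with hD
  have hDs : Summable D := (hfs.sub (summable_pois hl)).abs
  have hfmD : Summable (fm D) := summable_fm hDs
  set c : ℕ → ℝ := fun j => |bern q j - pois q j| with hc
  have hcs : Summable c := summable_bern_sub_pois hq0
  set H : ℕ → ℝ := fun k => ∑ j ∈ Finset.range (k + 1), c j * pois l (k - j) with hH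
  -- Cauchy product
  have habs : (Summable fun j => ‖c j‖) := by
    simpa [Real.norm_eq_abs] using hcs.abs
  have hpabs : (Summable fun j => ‖pois l j‖) := by
    have := summable_pois hl
    simpa [Real.norm_eq_abs, abs_of_nonneg (pois_nonneg hl _)] using this
  have hHs : Summable H := by
    have := summable_sum_mul_range_of_summable_norm' habs hcs hpabs (summable_pois hl)
    simpa [hH] using this
  have hHsum : ∑' k, H k = (∑' j, c j) * 1 := by
    rw [← tsum_pois hl]
    exact (tsum_mul_tsum_eq_tsum_sum_range_of_summable_norm' habs hcs hpabs
      (summable_pois hl)).symm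
  -- pointwise bound
  have hpt : ∀ k, |((1 - q) * f k + q * fm f k) - pois (l + q) k|
      ≤ (1 - q) * D k + q * fm D k + H k := by
    intro k
    have hfmeq : fm f k - fm (pois l) k = (fm (fun j => f j - pois l j)) k := by
      cases k <;> simp [fm]
    have hfmabs : |fm f k - fm (pois l) k| = fm D k := by
      rw [hfmeq]; cases k <;> simp [fm, hD]
    have hkey : ((1 - q) * f k + q * fm f k) - pois (l + q) k
        = (1 - q) * (f k - pois l k) + q * (fm f k - fm (pois l) k)
          + ∑ j ∈ Finset.range (k + 1), (bern q j - pois q j) * pois l (k - j) := by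
      have h1 : ∑ j ∈ Finset.range (k + 1), (bern q j - pois q j) * pois l (k - j)
          = ((1 - q) * pois l k + q * fm (pois l) k) - pois (l + q) k := by
        rw [show l + q = q + l from add_comm l q, pois_conv]
        rw [← bern_conv q l k]
        rw [← Finset.sum_sub_distrib]
        apply Finset.sum_congr rfl
        intro j _
        ring
      rw [h1]; ring
    rw [hkey]
    have e1 : |(1 - q) * (f k - pois l k)| = (1 - q) * D k := by
      rw [abs_mul, abs_of_nonneg (by linarith : (0:ℝ) ≤ 1 - q)]
    have e2 : |q * (fm f k - fm (pois l) k)| = q * fm D k := by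
      rw [abs_mul, abs_of_nonneg hq0, hfmabs]
    have e3 : |∑ j ∈ Finset.range (k + 1), (bern q j - pois q j) * pois l (k - j)| ≤ H k := by
      refine (Finset.abs_sum_le_sum_abs _ _).trans ?_
      apply Finset.sum_le_sum
      intro j _
      rw [abs_mul, abs_of_nonneg (pois_nonneg hl _)]
    calc |(1 - q) * (f k - pois l k) + q * (fm f k - fm (pois l) k)
          + ∑ j ∈ Finset.range (k + 1), (bern q j - pois q j) * pois l (k - j)|
        ≤ |(1 - q) * (f k - pois l k)| + |q * (fm f k - fm (pois l) k)|
          + |∑ j ∈ Finset.range (k + 1), (bern q j - pois q j) * pois l (k - j)| := by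
          exact (abs_add_le _ _).trans (by gcongr; exact abs_add_le _ _)
      _ ≤ (1 - q) * D k + q * fm D k + H k := by
          rw [e1, e2]; linarith
  -- sum up
  have hgs : Summable (fun k => |((1 - q) * f k + q * fm f k) - pois (l + q) k|) := by
    apply Summable.abs
    apply Summable.sub
    · exact ((hfs.mul_left _).add ((summable_fm hfs).mul_left _))
    · exact summable_pois (by linarith)
  have hmaj : Summable (fun k => (1 - q) * D k + q * fm D k + H k) :=
    ((hDs.mul_left _).add (hfmD.mul_left _)).add hHs
  calc ∑' k, |((1 - q) * f k + q * fm f k) - pois (l + q) k|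
      ≤ ∑' k, ((1 - q) * D k + q * fm D k + H k) := Summable.tsum_le_tsum hpt hgs hmaj
    _ = (1 - q) * ∑' k, D k + q * ∑' k, fm D k + ∑' k, H k := by
        rw [Summable.tsum_add ((hDs.mul_left _).add (hfmD.mul_left _)) hHs,
          Summable.tsum_add (hDs.mul_left _) (hfmD.mul_left _), tsum_mul_left, tsum_mul_left]
    _ = ∑' k, D k + ∑' j, c j := by
        rw [tsum_fm hDs, hHsum]; ring
    _ ≤ (∑' k, D k) + 2 * q ^ 2 := by
        have := bern_pois_dist hq0 hq1
        linarith

lemma pmf_summable {Ω : Type*} [MeasurableSpace Ω] (μ : Measure Ω) [IsProbabilityMeasure μ]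
    {T : Ω → ℕ} (hT : Measurable T) :
    Summable (fun k => (μ {ω | T ω = k}).toReal) := by
  have hdis : Pairwise (Function.onFun Disjoint fun k : ℕ => T ⁻¹' {k}) := by
    intro i j hij
    exact Disjoint.preimage T (by simpa using hij)
  have hsum : ∑' k : ℕ, μ (T ⁻¹' {k}) = 1 := by
    rw [← measure_iUnion hdis (fun k => hT (measurableSet_singleton k))]
    have : ⋃ k : ℕ, T ⁻¹' {k} = Set.univ := by
      ext ω; simp
    rw [this, measure_univ]
  have hne : ∑' k : ℕ, μ (T ⁻¹' {k}) ≠ ⊤ := by rw [hsum]; exact ENNReal.one_ne_top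
  exact ENNReal.summable_toReal hne

/-- **Le Cam's inequality.** Let `X 1, …, X n` be independent Bernoulli (indicator) random
variables, where `X i` equals `1` with probability `p i` and `0` otherwise, and let
`Y = ∑ i, X i` count the number of variables equal to `1`, `λ = ∑ i, p i`. Then the
distribution of `Y` is within total variation `2 ∑ i, (p i)^2` of the Poisson distribution
with rate `λ`:  `∑_k |P(Y = k) − e^{−λ} λ^k / k!| ≤ 2 ∑ i, (p i)²`. -/
theorem le_cam_inequality {Ω : Type*} [MeasurableSpace Ω] (μ : Measure Ω)
    [IsProbabilityMeasure μ] (n : ℕ) (X : Fin n → Ω → ℕ)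
    (hmeas : ∀ i, Measurable (X i))
    (hindep : iIndepFun X μ)
    (hval : ∀ i ω, X i ω = 0 ∨ X i ω = 1)
    (p : Fin n → ℝ)
    (hp : ∀ i, p i = (μ {ω | X i ω = 1}).toReal) :
    ∑' k : ℕ,
        |(μ {ω | ∑ i, X i ω = k}).toReal -
          Real.exp (-(∑ i, p i)) * (∑ i, p i) ^ k / (Nat.factorial k)| ≤
      2 * ∑ i, (p i) ^ 2 := by
  classical
  have hpnn : ∀ i, 0 ≤ p i := fun i => (hp i) ▸ ENNReal.toReal_nonneg
  have hple : ∀ i, p i ≤ 1 := by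
    intro i
    rw [hp i]
    have h1 : μ {ω | X i ω = 1} ≤ 1 := prob_le_one
    calc (μ {ω | X i ω = 1}).toReal ≤ (1 : ℝ≥0∞).toReal :=
          ENNReal.toReal_mono ENNReal.one_ne_top h1
      _ = 1 := by simp
  have key : ∀ s : Finset (Fin n),
      ∑' k : ℕ, |(μ {ω | ∑ i ∈ s, X i ω = k}).toReal - pois (∑ i ∈ s, p i) k|
        ≤ 2 * ∑ i ∈ s, p i ^ 2 := by
    intro s
    induction s using Finset.induction_on with
    | empty =>
      have h0 : ∀ k : ℕ, |(μ {ω : Ω | ∑ i ∈ (∅ : Finset (Fin n)), X i ω = k}).toReal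
          - pois (∑ i ∈ (∅ : Finset (Fin n)), p i) k| = 0 := by
        intro k
        simp only [Finset.sum_empty]
        cases k with
        | zero => simp [pois]
        | succ m => simp [pois]
      rw [tsum_congr h0]
      simp
    | @insert j s hj ih =>
      set T : Ω → ℕ := fun ω => ∑ i ∈ s, X i ω with hTdef
      have hTmeas : Measurable T := Finset.measurable_sum s (fun i _ => hmeas i)
      set fs : ℕ → ℝ := fun k => (μ {ω | T ω = k}).toReal with hfsdef
      have hfs : Summable fs := pmf_summable μ hTmeas
      have hindepTX : IndepFun (∑ i ∈ s, X i) (X j) μ :=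
        hindep.indepFun_finset_sum_of_notMem hmeas hj
      have hmul : ∀ (m v : ℕ), μ (T ⁻¹' {m} ∩ X j ⁻¹' {v})
          = μ (T ⁻¹' {m}) * μ (X j ⁻¹' {v}) := by
        intro m v
        have h := hindepTX.measure_inter_preimage_eq_mul {m} {v}
          (measurableSet_singleton m) (measurableSet_singleton v)
        have hTeq : (∑ i ∈ s, X i) ⁻¹' ({m} : Set ℕ) = T ⁻¹' {m} := by
          ext ω; simp [hTdef, Finset.sum_apply]
        rwa [hTeq] at h
      -- probabilities of X j
      have hA1 : (μ (X j ⁻¹' {1})).toReal = p j := by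
        rw [hp j]; rfl
      have hA0 : (μ (X j ⁻¹' {0})).toReal = 1 - p j := by
        have hu : X j ⁻¹' {0} ∪ X j ⁻¹' {1} = Set.univ := by
          ext ω
          rcases hval j ω with h | h <;> simp [h]
        have hd : Disjoint (X j ⁻¹' ({0} : Set ℕ)) (X j ⁻¹' {1}) :=
          Disjoint.preimage _ (by simp)
        have hadd := measure_union (μ := μ) hd ((hmeas j) (measurableSet_singleton 1))
        rw [hu, measure_univ] at hadd
        have h1 : (μ (X j ⁻¹' ({0} : Set ℕ)) + μ (X j ⁻¹' {1})).toReal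
            = (μ (X j ⁻¹' ({0} : Set ℕ))).toReal + (μ (X j ⁻¹' {1})).toReal :=
          ENNReal.toReal_add (measure_ne_top μ _) (measure_ne_top μ _)
        rw [← hadd] at h1
        simp only [ENNReal.toReal_one] at h1
        rw [hA1] at h1
        linarith
      have hsplit : ∀ k : ℕ, (μ {ω | ∑ i ∈ insert j s, X i ω = k}).toReal
          = (1 - p j) * fs k + p j * fm fs k := by
        intro k
        have hsum : ∀ ω, ∑ i ∈ insert j s, X i ω = X j ω + T ω := by
          intro ω; rw [Finset.sum_insert hj]
        cases k with
        | zero =>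
          have hset : {ω | ∑ i ∈ insert j s, X i ω = 0}
              = T ⁻¹' {0} ∩ X j ⁻¹' {0} := by
            ext ω
            simp only [Set.mem_setOf_eq, hsum ω, Set.mem_inter_iff, Set.mem_preimage,
              Set.mem_singleton_iff]
            omega
          rw [hset, hmul 0 0, ENNReal.toReal_mul, hA0]
          have h0 : fs 0 = (μ (T ⁻¹' {0})).toReal := rfl
          have hfm0 : fm fs 0 = 0 := rfl
          rw [hfm0, ← h0]; ring
        | succ m =>
          have hset : {ω | ∑ i ∈ insert j s, X i ω = m + 1}
              = (T ⁻¹' {m + 1} ∩ X j ⁻¹' {0}) ∪ (T ⁻¹' {m} ∩ X j ⁻¹' {1}) := by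
            ext ω
            simp only [Set.mem_setOf_eq, hsum ω, Set.mem_union, Set.mem_inter_iff,
              Set.mem_preimage, Set.mem_singleton_iff]
            rcases hval j ω with h | h <;> (rw [h]; constructor) <;> intro hh <;> omega
          have hd : Disjoint (T ⁻¹' ({m + 1} : Set ℕ) ∩ X j ⁻¹' {0})
              (T ⁻¹' {m} ∩ X j ⁻¹' {1}) := by
            apply Set.disjoint_of_subset Set.inter_subset_right Set.inter_subset_right
            exact Disjoint.preimage _ (by simp)
          have hmeas2 : MeasurableSet (T ⁻¹' ({m} : Set ℕ) ∩ X j ⁻¹' {1}) :=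
            (hTmeas (measurableSet_singleton m)).inter
              ((hmeas j) (measurableSet_singleton 1))
          rw [hset, measure_union hd hmeas2, ENNReal.toReal_add (measure_ne_top μ _)
            (measure_ne_top μ _), hmul, hmul, ENNReal.toReal_mul, ENNReal.toReal_mul,
            hA0, hA1]
          have hfm : fm fs (m + 1) = fs m := rfl
          have h1 : fs (m + 1) = (μ (T ⁻¹' {m + 1})).toReal := rfl
          have h2 : fs m = (μ (T ⁻¹' {m})).toReal := rfl
          rw [hfm, ← h1, ← h2]; ring
      have hl : 0 ≤ ∑ i ∈ s, p i := Finset.sum_nonneg (fun i _ => hpnn i)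
      calc ∑' k : ℕ, |(μ {ω | ∑ i ∈ insert j s, X i ω = k}).toReal
            - pois (∑ i ∈ insert j s, p i) k|
          = ∑' k : ℕ, |((1 - p j) * fs k + p j * fm fs k)
            - pois ((∑ i ∈ s, p i) + p j) k| := by
            apply tsum_congr
            intro k
            rw [hsplit k, Finset.sum_insert hj, add_comm (p j)]
        _ ≤ (∑' k, |fs k - pois (∑ i ∈ s, p i) k|) + 2 * p j ^ 2 :=
            lemA hfs hl (hpnn j) (hple j)
        _ ≤ 2 * ∑ i ∈ s, p i ^ 2 + 2 * p j ^ 2 := by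
            have := ih
            linarith
        _ = 2 * ∑ i ∈ insert j s, p i ^ 2 := by
            rw [Finset.sum_insert hj]; ring
  have h := key Finset.univ
  simpa only [pois] using h
end
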